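/- If A₁, A₂ are nearly convex subsets of a Euclidean space and B₁, B₂ are subsets with A₁ ≈ B₁ and A₂ ≈ B₂, then A₁ + A₂ is nearly convex and A₁ + A₂ ≈ B₁ + B₂. -/

import Mathlib

set_option linter.unusedSectionVars false
set_option maxHeartbeats 1000000
open Set Topology


open Pointwise

variable {X : Type*} [NormedAddCommGroup X] [InnerProductSpace ℝ X] [FiniteDimensional ℝ X]

def NearlyEqual (A B : Set X) : Prop :=
  closure A = closure B ∧ intrinsicInterior ℝ A = intrinsicInterior ℝ B

def NearlyConvex (A : Set X) : Prop :=
  ∃ C : Set X, Convex ℝ C ∧ C ⊆ A ∧ A ⊆ closure C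

section GenAux
variable {E : Type*} [NormedAddCommGroup E] [NormedSpace ℝ E]

lemma aux_closure_add_subset (S T : Set E) : closure S + closure T ⊆ closure (S + T) := by
  rintro x ⟨a, ha, b, hb, rfl⟩
  exact map_mem_closure₂ continuous_add ha hb fun u hu v hv => Set.add_mem_add hu hv

lemma aux_closure_sum_eq (S T : Set E) :
    closure (S + T) = closure (closure S + closure T) := by
  refine subset_antisymm (closure_mono (Set.add_subset_add subset_closure subset_closure)) ?_
  rw [← closure_closure (s := S + T)]
  exact closure_mono (aux_closure_add_subset S T)

lemma aux_interior_closure {t : Set E} (ht : Convex ℝ t) (hne : (interior t).Nonempty) :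
    interior (closure t) = interior t := by
  refine subset_antisymm ?_ (interior_mono subset_closure)
  obtain ⟨y, hy⟩ := hne
  intro x hx
  have hcont : ContinuousAt (fun ε : ℝ => x + ε • (x - y)) 0 := by fun_prop
  have hU : (fun ε : ℝ => x + ε • (x - y)) ⁻¹' interior (closure t) ∈ nhds (0 : ℝ) := by
    apply hcont.preimage_mem_nhds
    simpa using isOpen_interior.mem_nhds hx
  obtain ⟨δ, hδ, hball⟩ := Metric.mem_nhds_iff.1 hU
  set ε : ℝ := δ / 2 with hεdef
  have hε : 0 < ε := by positivity
  have hz : x + ε • (x - y) ∈ closure t := by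
    apply interior_subset (hball ?_)
    simp only [Metric.mem_ball, Real.dist_eq, sub_zero]
    rw [abs_of_pos hε]; linarith
  have hseg : x ∈ openSegment ℝ y (x + ε • (x - y)) := by
    refine ⟨ε / (1 + ε), 1 / (1 + ε), by positivity, by positivity, ?_, ?_⟩
    · field_simp; ring
    · have h1ε : (1 + ε) ≠ 0 := by positivity
      match_scalars <;> field_simp <;> ring
  exact ht.openSegment_interior_closure_subset_interior hy hz hseg

lemma aux_closure_interior {t : Set E} (ht : Convex ℝ t) (hne : (interior t).Nonempty) :
    closure (interior t) = closure t := by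
  refine subset_antisymm (closure_mono interior_subset) ?_
  obtain ⟨y, hy⟩ := hne
  intro x hx
  have h1 : openSegment ℝ y x ⊆ interior t :=
    ht.openSegment_interior_closure_subset_interior hy hx
  have h2 : x ∈ closure (openSegment ℝ y x) :=
    segment_subset_closure_openSegment (right_mem_segment ℝ y x)
  exact closure_mono h1 h2

lemma aux_ri_eq_interior [FiniteDimensional ℝ E] {t : Set E} (ht : affineSpan ℝ t = ⊤) :
    intrinsicInterior ℝ t = interior t := by
  have hopen : IsOpen ((affineSpan ℝ t : Set E)) := by
    rw [ht, AffineSubspace.top_coe]; exact isOpen_univ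
  have hmap : IsOpenMap ((↑) : affineSpan ℝ t → E) := hopen.isOpenMap_subtype_val
  rw [intrinsicInterior, ← hmap.preimage_interior_eq_interior_preimage continuous_subtype_val,
    Set.image_preimage_eq_inter_range, Subtype.range_coe]
  rw [ht, AffineSubspace.top_coe, Set.inter_univ]

lemma aux_key [FiniteDimensional ℝ E] {C : Set E} (hC : Convex ℝ C) :
    Convex ℝ (intrinsicInterior ℝ C) ∧ closure (intrinsicInterior ℝ C) = closure C ∧
      ∀ A : Set E, C ⊆ A → A ⊆ closure C → intrinsicInterior ℝ A = intrinsicInterior ℝ C := by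
  rcases C.eq_empty_or_nonempty with rfl | ⟨p, hp⟩
  · refine ⟨by rw [intrinsicInterior_empty]; exact convex_empty, by simp, ?_⟩
    intro A h1 h2
    rw [closure_empty] at h2
    rw [Set.subset_empty_iff.1 h2]
  · set V := affineSpan ℝ C with hV
    have hpV : p ∈ V := subset_affineSpan ℝ C hp
    set D := V.direction with hD
    let φ : D →ᵃⁱ[ℝ] E :=
      ((AffineIsometryEquiv.constVAdd ℝ E p).toAffineIsometry).comp D.subtypeₗᵢ.toAffineIsometry
    have hφ : ∀ v : D, φ v = p + ↑v := by
      intro v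
      simp [φ, AffineIsometryEquiv.constVAdd]
      rfl
    have hinj : Function.Injective φ := φ.isometry.injective
    have hrange : Set.range φ = (V : Set E) := by
      ext x
      constructor
      · rintro ⟨v, rfl⟩
        rw [hφ]
        have hv : (p + ↑v) -ᵥ p ∈ V.direction := by simpa using v.2
        exact (AffineSubspace.vsub_right_mem_direction_iff_mem hpV _).1 hv
      · intro hx
        refine ⟨⟨x - p, (AffineSubspace.vsub_right_mem_direction_iff_mem hpV x).2 hx⟩, ?_⟩
        rw [hφ]; simp
    have hVclosed : IsClosed (V : Set E) := V.closed_of_finiteDimensional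
    have hCV : C ⊆ (V : Set E) := subset_affineSpan ℝ C
    have hclCV : closure C ⊆ (V : Set E) := closure_minimal hCV hVclosed
    have hclosedEmb : IsClosedEmbedding φ := φ.isometry.isClosedEmbedding
    set C' := φ ⁻¹' C with hC'def
    have imgC : φ '' C' = C := by
      rw [Set.image_preimage_eq_inter_range, hrange, Set.inter_eq_self_of_subset_left hCV]
    have hC' : Convex ℝ C' := hC.affine_preimage φ.toAffineMap
    have spanC' : affineSpan ℝ C' = ⊤ := by
      rw [eq_top_iff]
      intro v _
      have h1 : (affineSpan ℝ C').map φ.toAffineMap = V := by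
        rw [AffineSubspace.map_span]
        simp only [AffineIsometry.coe_toAffineMap, imgC, hV]
      have h2 : φ v ∈ ((affineSpan ℝ C').map φ.toAffineMap : Set E) := by
        rw [h1]
        exact hrange ▸ Set.mem_range_self v
      obtain ⟨y, hy, hyv⟩ := h2
      exact hinj hyv ▸ hy
    have himgclC : φ '' closure C' = closure C := by
      refine subset_antisymm ?_ ?_
      · rw [← imgC] at *
        exact image_closure_subset_closure_image φ.continuous
      · refine closure_minimal ?_ (hclosedEmb.isClosedMap _ isClosed_closure)
        rw [← imgC]
        exact Set.image_mono subset_closure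
    have hintC'ne : (interior C').Nonempty :=
      (Convex.interior_nonempty_iff_affineSpan_eq_top hC').2 spanC'
    have hriC : intrinsicInterior ℝ C = φ '' interior C' := by
      conv_lhs => rw [← imgC]
      rw [AffineIsometry.image_intrinsicInterior, aux_ri_eq_interior spanC']
    refine ⟨?_, ?_, ?_⟩
    · rw [hriC]
      exact (hC'.interior).affine_image φ.toAffineMap
    · rw [hriC, hclosedEmb.closure_image_eq, aux_closure_interior hC' hintC'ne, himgclC]
    · intro A h1 h2
      set A' := φ ⁻¹' A with hA'def
      have hAV : A ⊆ Set.range φ := fun x hx => hrange ▸ hclCV (h2 hx)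
      have imgA : φ '' A' = A := by
        rw [Set.image_preimage_eq_inter_range, Set.inter_eq_self_of_subset_left hAV]
      have hsub1 : C' ⊆ A' := Set.preimage_mono h1
      have hsub2 : A' ⊆ closure C' := by
        intro x hx
        have hmem : φ x ∈ closure C := h2 hx
        rw [← himgclC] at hmem
        obtain ⟨y, hy, he⟩ := hmem
        exact hinj he ▸ hy
      have hint : interior A' = interior C' := by
        refine subset_antisymm ?_ (interior_mono hsub1)
        rw [← aux_interior_closure hC' hintC'ne]
        exact interior_mono hsub2
      have spanA' : affineSpan ℝ A' = ⊤ :=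
        eq_top_iff.2 (spanC' ▸ affineSpan_mono ℝ hsub1)
      rw [← imgA, AffineIsometry.image_intrinsicInterior, aux_ri_eq_interior spanA', hint, hriC]
end GenAux

theorem nearlyEqual_add (A₁ A₂ B₁ B₂ : Set X)
    (hA₁ : NearlyConvex A₁) (hA₂ : NearlyConvex A₂)
    (h₁ : NearlyEqual A₁ B₁) (h₂ : NearlyEqual A₂ B₂) :
    NearlyConvex (A₁ + A₂) ∧ NearlyEqual (A₁ + A₂) (B₁ + B₂) := by
  obtain ⟨C₁, hC₁, hC₁A, hAC₁⟩ := hA₁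
  obtain ⟨C₂, hC₂, hC₂A, hAC₂⟩ := hA₂
  obtain ⟨hconv₁, hclri₁, hbet₁⟩ := aux_key hC₁
  obtain ⟨hconv₂, hclri₂, hbet₂⟩ := aux_key hC₂
  have hclA₁ : closure A₁ = closure C₁ :=
    subset_antisymm (closure_minimal hAC₁ isClosed_closure) (closure_mono hC₁A)
  have hclA₂ : closure A₂ = closure C₂ :=
    subset_antisymm (closure_minimal hAC₂ isClosed_closure) (closure_mono hC₂A)
  have hriA₁ : intrinsicInterior ℝ A₁ = intrinsicInterior ℝ C₁ := hbet₁ A₁ hC₁A hAC₁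
  have hriA₂ : intrinsicInterior ℝ A₂ = intrinsicInterior ℝ C₂ := hbet₂ A₂ hC₂A hAC₂
  have hriB₁ : intrinsicInterior ℝ C₁ ⊆ B₁ :=
    (hriA₁ ▸ h₁.2 : intrinsicInterior ℝ C₁ = intrinsicInterior ℝ B₁) ▸ intrinsicInterior_subset
  have hriB₂ : intrinsicInterior ℝ C₂ ⊆ B₂ :=
    (hriA₂ ▸ h₂.2 : intrinsicInterior ℝ C₂ = intrinsicInterior ℝ B₂) ▸ intrinsicInterior_subset
  have hclB₁ : closure B₁ = closure C₁ := h₁.1.symm.trans hclA₁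
  have hclB₂ : closure B₂ = closure C₂ := h₂.1.symm.trans hclA₂
  have hsumsub : A₁ + A₂ ⊆ closure (C₁ + C₂) :=
    (Set.add_subset_add hAC₁ hAC₂).trans (aux_closure_add_subset C₁ C₂)
  refine ⟨⟨C₁ + C₂, hC₁.add hC₂, Set.add_subset_add hC₁A hC₂A, hsumsub⟩, ?_, ?_⟩
  · calc closure (A₁ + A₂) = closure (closure A₁ + closure A₂) := aux_closure_sum_eq _ _
      _ = closure (closure B₁ + closure B₂) := by rw [h₁.1, h₂.1]
      _ = closure (B₁ + B₂) := (aux_closure_sum_eq _ _).symm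
  · set W := intrinsicInterior ℝ C₁ + intrinsicInterior ℝ C₂ with hW
    have hWconv : Convex ℝ W := hconv₁.add hconv₂
    have hclW : closure W = closure (C₁ + C₂) := by
      rw [hW, aux_closure_sum_eq, hclri₁, hclri₂, ← aux_closure_sum_eq]
    obtain ⟨-, -, hbetS⟩ := aux_key (hC₁.add hC₂)
    have e1 : intrinsicInterior ℝ (A₁ + A₂) = intrinsicInterior ℝ (C₁ + C₂) :=
      hbetS _ (Set.add_subset_add hC₁A hC₂A) hsumsub
    obtain ⟨-, -, hbetW⟩ := aux_key hWconv
    have e2 : intrinsicInterior ℝ (C₁ + C₂) = intrinsicInterior ℝ W :=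
      hbetW _ (Set.add_subset_add intrinsicInterior_subset intrinsicInterior_subset)
        (hclW ▸ subset_closure)
    have e3 : intrinsicInterior ℝ (B₁ + B₂) = intrinsicInterior ℝ W := by
      refine hbetW _ (Set.add_subset_add hriB₁ hriB₂) ?_
      calc B₁ + B₂ ⊆ closure B₁ + closure B₂ :=
            Set.add_subset_add subset_closure subset_closure
        _ = closure C₁ + closure C₂ := by rw [hclB₁, hclB₂]
        _ ⊆ closure (C₁ + C₂) := aux_closure_add_subset _ _
        _ = closure W := hclW.symm
    rw [e1, e2, ← e3]
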